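/- Let α = (√5 - 1)/2, g(x) = log(2 - 2cos(2πx)) and S_k(α) = ∑_{j=1}^{k} g(jα). Then there exists a constant C > 0 such that |S_k(α)| ≤ C (log k)² for all k ≥ 2. -/

import Mathlib

open Real Finset intervalIntegral

noncomputable def Complex.abs : AbsoluteValue ℂ ℝ where
  toFun z := ‖z‖
  map_mul' := norm_mul
  nonneg' := norm_nonneg
  eq_zero' _ := norm_eq_zero
  add_le' := norm_add_le

theorem Complex.norm_eq_abs (z : ℂ) : ‖z‖ = Complex.abs z := rfl

theorem Complex.sq_abs (z : ℂ) : Complex.abs z ^ 2 = Complex.normSq z := Complex.sq_norm z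

theorem Complex.abs_ofReal (r : ℝ) : Complex.abs (r : ℂ) = |r| := by
  show ‖(r : ℂ)‖ = |r|
  simp

theorem Complex.abs_exp_ofReal_mul_I (x : ℝ) :
    Complex.abs (Complex.exp (x * Complex.I)) = 1 := Complex.norm_exp_ofReal_mul_I x

theorem Complex.re_le_abs (z : ℂ) : z.re ≤ Complex.abs z := Complex.re_le_norm z

theorem Complex.abs_re_le_abs (z : ℂ) : |z.re| ≤ Complex.abs z := Complex.abs_re_le_norm z

lemma golden_dioph (r : ℕ) (hr : 1 ≤ r) (p : ℤ) :
    1/(3*(r:ℝ)) ≤ |(r:ℝ) * ((Real.sqrt 5 - 1)/2) - p| := by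
  set α : ℝ := (Real.sqrt 5 - 1)/2 with hα
  have h5 : Real.sqrt 5 ^ 2 = 5 := Real.sq_sqrt (by norm_num)
  have h5nn : (0:ℝ) ≤ Real.sqrt 5 := Real.sqrt_nonneg 5
  have h5lt : Real.sqrt 5 < 2.3 := by
    nlinarith [Real.sq_sqrt (show (0:ℝ) ≤ 5 by norm_num)]
  have hirr : Irrational (Real.sqrt 5) := (by norm_num : Nat.Prime 5).irrational_sqrt
  have hrpos : (0:ℝ) < r := by exact_mod_cast hr
  have hr1 : (1:ℝ) ≤ r := by exact_mod_cast hr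
  have hm : ((p^2 + p*r - (r:ℤ)^2 : ℤ):ℝ) ≠ 0 := by
    intro h
    have h2 : ((2*p + (r:ℤ) :ℤ):ℝ)^2 = (Real.sqrt 5 * r)^2 := by push_cast at h ⊢; nlinarith
    have h3 : Real.sqrt 5 * r = |((2*p + (r:ℤ):ℤ):ℝ)| := by
      nlinarith [abs_nonneg (((2*p + (r:ℤ):ℤ)):ℝ), sq_abs (((2*p + (r:ℤ):ℤ)):ℝ),
        mul_nonneg h5nn hrpos.le]
    have h4 : Irrational (Real.sqrt 5 * r) := by
      simpa using hirr.mul_ratCast (q := (r:ℚ)) (Nat.cast_ne_zero.mpr (by omega))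
    rw [h3, ← Int.cast_abs] at h4
    exact (Int.not_irrational _) h4
  have hm1 : (1:ℝ) ≤ |((p^2 + p*r - (r:ℤ)^2 : ℤ):ℝ)| := by
    have : (1:ℤ) ≤ |p^2 + p*r - (r:ℤ)^2| := Int.one_le_abs (by exact_mod_cast hm)
    exact_mod_cast this
  set β : ℝ := (r:ℝ) * α - p with hβ
  set γ : ℝ := (r:ℝ) * ((-Real.sqrt 5 - 1)/2) - p with hγ
  have hprod : β * γ = (p:ℝ)^2 + p*r - (r:ℝ)^2 := by
    rw [hβ, hγ, hα]; linear_combination (-(r:ℝ)^2/4) * h5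
  have habs : 1 ≤ |β| * |γ| := by
    rw [← abs_mul, hprod]
    calc (1:ℝ) ≤ |((p^2 + p*r - (r:ℤ)^2 : ℤ):ℝ)| := hm1
    _ = |(p:ℝ)^2 + p*r - (r:ℝ)^2| := by push_cast; ring_nf
  by_contra hc
  push_neg at hc
  have hβlt : |β| < 1/(3*r) := hc
  have hγle : |γ| ≤ |β| + Real.sqrt 5 * r := by
    have hgb : γ = β - Real.sqrt 5 * r := by rw [hβ, hγ, hα]; ring
    rw [hgb]
    calc |β - Real.sqrt 5 * r| ≤ |β| + |Real.sqrt 5 * r| := abs_sub _ _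
    _ = |β| + Real.sqrt 5 * r := by rw [abs_of_nonneg (mul_nonneg h5nn hrpos.le)]
  have h13 : 1/(3*(r:ℝ)) ≤ 1/3 := by
    apply div_le_div_of_nonneg_left (by norm_num) (by norm_num) (by linarith)
  have hsr : Real.sqrt 5 * r ≤ 2.3 * r := by nlinarith
  have h1 : |γ| < 3 * r := by nlinarith
  have hmul : (1/(3*(r:ℝ))) * (3*r) = 1 := by field_simp
  have : |β| * |γ| < 1 := by nlinarith [abs_nonneg γ, abs_nonneg β]
  linarith


lemma abs_one_sub_exp (x : ℝ) :
    Complex.abs (1 - Complex.exp (x * Complex.I)) = 2 * |Real.sin (x/2)| := by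
  have hsq : (Complex.abs (1 - Complex.exp (x * Complex.I)))^2
      = 2 - 2 * Real.cos x := by
    rw [Complex.sq_abs, Complex.normSq_apply]
    simp only [Complex.sub_re, Complex.sub_im, Complex.exp_ofReal_mul_I_re,
      Complex.exp_ofReal_mul_I_im, Complex.one_re, Complex.one_im]
    nlinarith [Real.sin_sq_add_cos_sq x]
  have h2 : Real.sin (x/2)^2 = 1/2 - Real.cos x / 2 := by
    have h := Real.cos_sq (x/2)
    have h' : 2 * (x/2) = x := by ring
    rw [h'] at h
    nlinarith [Real.sin_sq_add_cos_sq (x/2)]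
  nlinarith [Complex.abs.nonneg (1 - Complex.exp (x * Complex.I)), abs_nonneg (Real.sin (x/2)),
    sq_abs (Real.sin (x/2))]

lemma sin_pi_ge (y : ℝ) : 2 * |y - round y| ≤ |Real.sin (Real.pi * y)| := by
  set n : ℤ := round y
  set δ : ℝ := y - n with hδ
  have hδle : |δ| ≤ 1/2 := abs_sub_round y
  have h1 : Real.sin (Real.pi * y) = (-1)^n * Real.sin (Real.pi * δ) := by
    have h : Real.pi * y = Real.pi * δ + n * Real.pi := by rw [hδ]; ring
    rw [h, Real.sin_add_int_mul_pi]
  have h2 : |Real.sin (Real.pi * y)| = |Real.sin (Real.pi * δ)| := by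
    rw [h1, abs_mul]
    rcases Int.even_or_odd n with he | ho
    · rw [he.neg_one_zpow]; simp
    · rw [Odd.neg_one_zpow ho]; simp
  rw [h2]
  have h3 : |Real.sin (Real.pi * δ)| = Real.sin (Real.pi * |δ|) := by
    rcases abs_cases δ with ⟨h, _⟩ | ⟨h, hneg⟩
    · rw [h, abs_of_nonneg]
      apply Real.sin_nonneg_of_nonneg_of_le_pi
      · positivity
      · nlinarith [Real.pi_pos, abs_nonneg δ]
    · have hsn : 0 ≤ Real.sin (Real.pi * -δ) :=
        Real.sin_nonneg_of_nonneg_of_le_pi (by nlinarith [Real.pi_pos])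
          (by nlinarith [Real.pi_pos, abs_nonneg δ, h])
      have hh : Real.sin (Real.pi * δ) = -Real.sin (Real.pi * -δ) := by
        rw [mul_neg, Real.sin_neg, neg_neg]
      rw [h, hh, abs_neg, abs_of_nonneg hsn]
  rw [h3]
  have hms := Real.mul_le_sin (x := Real.pi * |δ|) (by positivity)
    (by nlinarith [Real.pi_pos])
  calc 2 * |δ| = 2/Real.pi * (Real.pi * |δ|) := by field_simp
  _ ≤ Real.sin (Real.pi * |δ|) := hms


lemma log_trunc (w : ℂ) (hw : Complex.abs w = 1) (hw1 : w ≠ 1) (R : ℕ) :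
    ‖Complex.log (1 - w) + ∑ r ∈ Icc 1 R, w^r / r‖
      ≤ 2 / ((R+1) * Complex.abs (1 - w)) := by
  have habs : 0 < Complex.abs (1 - w) := by
    rw [AbsoluteValue.pos_iff]
    intro h
    exact hw1 (by linear_combination -h)
  have hwre : w.re < 1 := by
    rcases lt_or_eq_of_le ((Complex.re_le_abs w).trans hw.le) with h | h
    · exact h
    · exfalso; apply hw1
      have him : w.im = 0 := by
        have := Complex.sq_abs w
        rw [hw, Complex.normSq_apply, ← h] at this
        nlinarith
      apply Complex.ext <;> simp [← h, him]
  have hne : ∀ t : ℝ, t ∈ Set.Icc (0:ℝ) 1 → 0 < (1 - (t:ℂ)*w).re := by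
    intro t ht
    obtain ⟨ht0, ht1⟩ := ht
    simp only [Complex.sub_re, Complex.one_re, Complex.mul_re, Complex.ofReal_re,
      Complex.ofReal_im]
    rcases le_or_gt w.re 0 with h | h
    · nlinarith
    · nlinarith
  have hne' : ∀ t : ℝ, t ∈ Set.Icc (0:ℝ) 1 → (1 - (t:ℂ)*w) ≠ 0 := by
    intro t ht h
    have := hne t ht
    rw [h] at this
    simp at this
  -- FTC
  have hderiv : ∀ t : ℝ, t ∈ Set.uIcc (0:ℝ) 1 →
      HasDerivAt (fun s : ℝ => Complex.log (1 - (s:ℂ)*w)) (-w / (1 - (t:ℂ)*w)) t := by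
    intro t ht
    rw [Set.uIcc_of_le (by norm_num : (0:ℝ) ≤ 1)] at ht
    have hinner : HasDerivAt (fun z : ℂ => 1 - z*w) (-w) (t:ℂ) := by
      simpa using ((hasDerivAt_id (t:ℂ)).mul_const w).const_sub 1
    have hlog : HasDerivAt Complex.log (1 - (t:ℂ)*w)⁻¹ (1 - (t:ℂ)*w) :=
      Complex.hasDerivAt_log (Or.inl (hne t ht))
    have := (hlog.comp (t:ℂ) hinner).comp_ofReal
    convert this using 1
    · funext s; simp only [Function.comp_apply]
    · rw [div_eq_inv_mul]
  have hcont : ContinuousOn (fun t : ℝ => -w / (1 - (t:ℂ)*w)) (Set.uIcc (0:ℝ) 1) := by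
    rw [Set.uIcc_of_le (by norm_num : (0:ℝ) ≤ 1)]
    exact continuousOn_const.div
      (Continuous.continuousOn (continuous_const.sub (Complex.continuous_ofReal.mul continuous_const))) hne'
  have hftc : ∫ t in (0:ℝ)..1, -w / (1 - (t:ℂ)*w) = Complex.log (1 - w) := by
    rw [integral_eq_sub_of_hasDerivAt hderiv hcont.intervalIntegrable]
    norm_num [Complex.log_one]
  -- pointwise identity
  have hident : ∀ t : ℝ, t ∈ Set.Icc (0:ℝ) 1 →
      -w / (1 - (t:ℂ)*w) = -(∑ r ∈ range R, ((t:ℂ)*w)^r) * w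
        + -(((t:ℂ)*w)^R * w / (1 - (t:ℂ)*w)) := by
    intro t ht
    have h0 := hne' t ht
    have hg := geom_sum_mul ((t:ℂ)*w) R
    have hgs : ∑ r ∈ range R, ((t:ℂ)*w)^r = (1 - ((t:ℂ)*w)^R) / (1 - (t:ℂ)*w) := by
      rw [eq_div_iff h0]; linear_combination -hg
    rw [hgs]; ring
  -- integrability of the two pieces
  have hInt1 : IntervalIntegrable (fun t : ℝ => -(∑ r ∈ range R, ((t:ℂ)*w)^r) * w)
      MeasureTheory.volume 0 1 := by
    apply Continuous.intervalIntegrable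
    exact ((continuous_finset_sum _ (fun r _ =>
      (Complex.continuous_ofReal.mul continuous_const).pow r)).neg).mul continuous_const
  have hInt2 : IntervalIntegrable (fun t : ℝ => -(((t:ℂ)*w)^R * w / (1 - (t:ℂ)*w)))
      MeasureTheory.volume 0 1 := by
    apply ContinuousOn.intervalIntegrable
    rw [Set.uIcc_of_le (by norm_num : (0:ℝ) ≤ 1)]
    apply ContinuousOn.neg
    exact (Continuous.continuousOn (((Complex.continuous_ofReal.mul continuous_const).pow R).mul
      continuous_const)).div
      (Continuous.continuousOn (continuous_const.sub
        (Complex.continuous_ofReal.mul continuous_const))) hne'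
  have hsplit : Complex.log (1 - w)
      = (∫ t in (0:ℝ)..1, -(∑ r ∈ range R, ((t:ℂ)*w)^r) * w)
        + (∫ t in (0:ℝ)..1, -(((t:ℂ)*w)^R * w / (1 - (t:ℂ)*w))) := by
    rw [← hftc, ← integral_add hInt1 hInt2]
    apply integral_congr
    intro t ht
    rw [Set.uIcc_of_le (by norm_num : (0:ℝ) ≤ 1)] at ht
    exact hident t ht
  -- first integral
  have hfirst : ∫ t in (0:ℝ)..1, (-(∑ r ∈ range R, ((t:ℂ)*w)^r) * w)
      = -∑ r ∈ Icc 1 R, w^r/r := by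
    have hfun : ∀ t : ℝ, (-(∑ r ∈ range R, ((t:ℂ)*w)^r) * w)
        = ∑ r ∈ range R, (-(w^(r+1)) * (((t^r : ℝ)):ℂ)) := by
      intro t
      rw [neg_mul, Finset.sum_mul, ← Finset.sum_neg_distrib]
      apply Finset.sum_congr rfl
      intro r _
      push_cast
      ring
    simp only [hfun]
    rw [integral_finset_sum]
    · have hterm : ∀ r : ℕ, (∫ t in (0:ℝ)..1, (-(w^(r+1)) * (((t^r : ℝ)):ℂ)))
          = -(w^(r+1)) * (((r:ℝ)+1)⁻¹ : ℝ) := by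
        intro r
        rw [integral_const_mul, intervalIntegral.integral_ofReal, integral_pow]
        norm_num
      simp only [hterm]
      rw [← Finset.sum_neg_distrib]
      rw [← Finset.Ico_add_one_right_eq_Icc, Finset.sum_Ico_eq_sum_range]
      apply Finset.sum_congr (by norm_num)
      intro i _
      push_cast
      ring
    · intro r _
      apply Continuous.intervalIntegrable
      exact continuous_const.mul (Complex.continuous_ofReal.comp (continuous_pow r))
  -- remainder norm bound
  have hhalf : ∀ t : ℝ, t ∈ Set.Icc (0:ℝ) 1 →
      Complex.abs (1 - w) ≤ 2 * Complex.abs (1 - (t:ℂ)*w) := by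
    intro t ht
    obtain ⟨ht0, ht1⟩ := ht
    have h1 : Complex.abs (1 - w) ≤ Complex.abs (1 - (t:ℂ)*w) + (1 - t) := by
      calc Complex.abs (1 - w) = Complex.abs ((1 - (t:ℂ)*w) + ((t:ℂ)-1)*w) := by ring_nf
      _ ≤ Complex.abs (1 - (t:ℂ)*w) + Complex.abs (((t:ℂ)-1)*w) := Complex.abs.add_le _ _
      _ = Complex.abs (1 - (t:ℂ)*w) + (1 - t) := by
          rw [map_mul, hw, mul_one, ← Complex.ofReal_one, ← Complex.ofReal_sub,
            Complex.abs_ofReal, abs_of_nonpos (by linarith)]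
          ring
    have h2 : 1 - t ≤ Complex.abs (1 - (t:ℂ)*w) := by
      have h := norm_sub_norm_le (1:ℂ) ((t:ℂ)*w)
      simpa [Complex.norm_eq_abs, map_mul, hw, Complex.abs_ofReal,
        abs_of_nonneg ht0] using h
    linarith
  have hbd : ∀ t : ℝ, t ∈ Set.uIoc (0:ℝ) 1 →
      ‖((t:ℂ)*w)^R * w / (1 - (t:ℂ)*w)‖ ≤ t^R * (2 / Complex.abs (1 - w)) := by
    intro t ht
    rw [Set.uIoc_of_le (by norm_num : (0:ℝ) ≤ 1)] at ht
    obtain ⟨ht0, ht1⟩ := ht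
    have htIcc : t ∈ Set.Icc (0:ℝ) 1 := ⟨ht0.le, ht1⟩
    have hd := hhalf t htIcc
    have hdpos : 0 < Complex.abs (1 - (t:ℂ)*w) := by
      rw [AbsoluteValue.pos_iff]; exact hne' t htIcc
    rw [Complex.norm_eq_abs, map_div₀, map_mul, map_pow, map_mul, hw,
      Complex.abs_ofReal, abs_of_nonneg ht0.le]
    rw [div_le_iff₀ hdpos]
    rw [mul_one, mul_one]
    calc t ^ R = t^R * 1 := (mul_one _).symm
    _ ≤ (t^R * (2 / Complex.abs (1-w))) * Complex.abs (1 - (t:ℂ)*w) := by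
        rw [mul_assoc]
        apply mul_le_mul_of_nonneg_left _ (pow_nonneg ht0.le R)
        rw [div_mul_eq_mul_div, le_div_iff₀ habs, one_mul]
        linarith
  have hInt : IntervalIntegrable (fun t : ℝ => t^R * (2 / Complex.abs (1-w)))
      MeasureTheory.volume 0 1 := by
    apply Continuous.intervalIntegrable
    exact (continuous_pow R).mul continuous_const
  have hval : (∫ t in (0:ℝ)..1, t^R * (2 / Complex.abs (1-w)))
      = 2 / ((R+1) * Complex.abs (1 - w)) := by
    rw [integral_mul_const, integral_pow]
    field_simp
    simp
  have hrem : ‖∫ t in (0:ℝ)..1, ((t:ℂ)*w)^R * w / (1 - (t:ℂ)*w)‖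
      ≤ 2 / ((R+1) * Complex.abs (1 - w)) := by
    calc ‖∫ t in (0:ℝ)..1, ((t:ℂ)*w)^R * w / (1 - (t:ℂ)*w)‖
        ≤ |∫ t in (0:ℝ)..1, t^R * (2 / Complex.abs (1-w))| := by
          apply norm_integral_le_abs_of_norm_le (g := fun t => t^R * (2 / Complex.abs (1-w)))
            _ hInt
          filter_upwards [MeasureTheory.self_mem_ae_restrict measurableSet_uIoc] with t ht
          exact hbd t ht
    _ = 2 / ((R+1) * Complex.abs (1 - w)) := by
        rw [hval, abs_of_nonneg (by positivity)]
  have hkey : Complex.log (1 - w) + ∑ r ∈ Icc 1 R, w^r/r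
      = -∫ t in (0:ℝ)..1, ((t:ℂ)*w)^R * w / (1 - (t:ℂ)*w) := by
    rw [hsplit, hfirst, integral_neg]
    ring
  rw [hkey, norm_neg]
  exact hrem


lemma geom_bound (ζ : ℂ) (hζ : Complex.abs ζ = 1) (hζ1 : ζ ≠ 1) (k : ℕ) :
    ‖∑ j ∈ Icc 1 k, ζ^j‖ ≤ 2 / Complex.abs (1 - ζ) := by
  have habs : 0 < Complex.abs (1 - ζ) := by
    rw [AbsoluteValue.pos_iff]
    intro h
    exact hζ1 (by linear_combination -h)
  have h1 : ∑ j ∈ Icc 1 k, ζ^j = (ζ^(k+1) - ζ) / (ζ - 1) := by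
    have h0 : Finset.range (k+1) = insert 0 (Icc 1 k) := by
      ext x
      simp [Finset.mem_range, Finset.mem_insert, Finset.mem_Icc, Nat.lt_succ_iff]
      omega
    have hgeo := geom_sum_eq hζ1 (k+1)
    rw [h0, Finset.sum_insert (by simp)] at hgeo
    have hne : ζ - 1 ≠ 0 := sub_ne_zero.mpr hζ1
    field_simp at hgeo ⊢
    linear_combination hgeo
  rw [h1]
  rw [norm_div]
  have h2 : ‖ζ^(k+1) - ζ‖ ≤ 2 := by
    calc ‖ζ^(k+1) - ζ‖ ≤ ‖ζ^(k+1)‖ + ‖ζ‖ := norm_sub_le _ _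
    _ = 2 := by
        rw [norm_pow]
        simp [Complex.norm_eq_abs, hζ]
        norm_num
  have h3 : ‖ζ - 1‖ = Complex.abs (1 - ζ) := by
    rw [Complex.norm_eq_abs, ← AbsoluteValue.map_neg Complex.abs]
    ring_nf
  rw [h3]
  gcongr


lemma harm_le (R : ℕ) : ∑ q ∈ Icc 1 R, (1/(q:ℝ)) ≤ 1 + Real.log R := by
  induction R with
  | zero => simp
  | succ R ih =>
    rw [Finset.sum_Icc_succ_top (by omega : 1 ≤ R + 1)]
    rcases Nat.eq_zero_or_pos R with h | h
    · subst h; norm_num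
    · have hR : (0:ℝ) < R := by exact_mod_cast h
      have hstep : (1:ℝ)/(R+1) ≤ Real.log (R+1) - Real.log R := by
        have hx : (0:ℝ) < (R:ℝ)/(R+1) := by positivity
        have := Real.log_le_sub_one_of_pos hx
        rw [Real.log_div (by positivity) (by positivity)] at this
        have h2 : (R:ℝ)/(R+1) - 1 = -(1/(R+1)) := by field_simp; ring
        linarith [this, h2.le]
      have hcast : ((R+1 : ℕ):ℝ) = (R:ℝ)+1 := by push_cast; ring
      rw [hcast]
      linarith

lemma separated_sum (A : Finset ℕ) (d R : ℕ) (hd : 1 ≤ d) (hR : 1 ≤ R)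
    (hmem : ∀ r ∈ A, d ≤ r ∧ r ≤ R)
    (hsep : ∀ r ∈ A, ∀ r' ∈ A, r < r' → d ≤ r' - r) :
    ∑ r ∈ A, (1/(r:ℝ)) ≤ (1/(d:ℝ)) * (1 + Real.log R) := by
  have hinj : Set.InjOn (· / d) A := by
    intro r hr r' hr' h
    have h' : r / d = r' / d := h
    by_contra hne
    rcases Nat.lt_or_ge r r' with hlt | hge
    · have := hsep r hr r' hr' hlt
      have : r' / d ≥ r / d + 1 := by
        calc r'/d ≥ (r + d)/d := Nat.div_le_div_right (by omega)
        _ = r/d + 1 := Nat.add_div_right r hd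
      omega
    · have hlt : r' < r := by omega
      have := hsep r' hr' r hr hlt
      have : r / d ≥ r' / d + 1 := by
        calc r/d ≥ (r' + d)/d := Nat.div_le_div_right (by omega)
        _ = r'/d + 1 := Nat.add_div_right r' hd
      omega
  have himg : Finset.image (· / d) A ⊆ Icc 1 R := by
    intro q hq
    rw [Finset.mem_image] at hq
    obtain ⟨r, hr, rfl⟩ := hq
    obtain ⟨h1, h2⟩ := hmem r hr
    rw [Finset.mem_Icc]
    constructor
    · exact Nat.one_le_div_iff hd |>.mpr h1
    · calc r / d ≤ r := Nat.div_le_self r d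
      _ ≤ R := h2
  calc ∑ r ∈ A, (1/(r:ℝ)) ≤ ∑ r ∈ A, (1/(d:ℝ)) * (1/((r/d : ℕ):ℝ)) := by
        apply Finset.sum_le_sum
        intro r hr
        obtain ⟨h1, _⟩ := hmem r hr
        have hq1 : 1 ≤ r / d := Nat.one_le_div_iff hd |>.mpr h1
        have hqpos : (0:ℝ) < ((r/d : ℕ):ℝ) := by exact_mod_cast hq1
        have hdr : (d:ℝ) * ((r/d : ℕ):ℝ) ≤ r := by
          calc (d:ℝ) * ((r/d : ℕ):ℝ) = (((r/d)*d : ℕ):ℝ) := by push_cast; ring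
          _ ≤ r := by exact_mod_cast Nat.div_mul_le_self r d
        rw [one_div, one_div, one_div, ← mul_inv]
        apply inv_anti₀ (by positivity)
        exact hdr
  _ = (1/(d:ℝ)) * ∑ q ∈ Finset.image (· / d) A, (1/(q:ℝ)) := by
      rw [Finset.mul_sum, Finset.sum_image (fun x hx y hy h => hinj hx hy h)]
  _ ≤ (1/(d:ℝ)) * ∑ q ∈ Icc 1 R, (1/(q:ℝ)) := by
      apply mul_le_mul_of_nonneg_left _ (by positivity)
      apply Finset.sum_le_sum_of_subset_of_nonneg himg
      intro q _ _
      positivity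
  _ ≤ (1/(d:ℝ)) * (1 + Real.log R) := by
      apply mul_le_mul_of_nonneg_left (harm_le R) (by positivity)


lemma count_sum (α : ℝ) (hdio : ∀ r : ℕ, 1 ≤ r → ∀ p : ℤ, 1/(3*(r:ℝ)) ≤ |(r:ℝ) * α - p|)
    (R : ℕ) (hR : 1 ≤ R) :
    ∑ r ∈ Icc 1 R, 1/((r:ℝ) * |(r:ℝ)*α - round ((r:ℝ)*α)|)
      ≤ 60 * (1 + Real.log R)^2 := by
  set ε : ℕ → ℝ := fun n => |(n:ℝ)*α - round ((n:ℝ)*α)| with hε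
  have hRpos : (0:ℝ) < R := by exact_mod_cast hR
  have hlogR : 0 ≤ Real.log R := Real.log_nonneg (by exact_mod_cast hR)
  have hεlb : ∀ n : ℕ, 1 ≤ n → 1/(3*(n:ℝ)) ≤ ε n := fun n hn => hdio n hn _
  have hεpos : ∀ n : ℕ, 1 ≤ n → 0 < ε n := by
    intro n hn
    have h := hεlb n hn
    have : (0:ℝ) < n := by exact_mod_cast hn
    have : 0 < 1/(3*(n:ℝ)) := by positivity
    linarith
  have hεhalf : ∀ n : ℕ, ε n ≤ 1/2 := fun n => abs_sub_round _
  set s : ℕ → ℕ := fun n => Nat.log 2 ⌊1/ε n⌋₊ with hs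
  set S : ℕ := Nat.log 2 (3*R) with hS
  -- fiber facts
  have hfl2 : ∀ n : ℕ, 1 ≤ n → 2 ≤ ⌊1/ε n⌋₊ := by
    intro n hn
    apply Nat.le_floor
    rw [le_div_iff₀ (hεpos n hn)]
    have := hεhalf n
    push_cast
    linarith
  have h2s_le : ∀ n : ℕ, 1 ≤ n → (2:ℝ)^(s n) ≤ 1/ε n := by
    intro n hn
    have h1 : 2^(s n) ≤ ⌊1/ε n⌋₊ := Nat.pow_log_le_self 2 (by have := hfl2 n hn; omega)
    calc (2:ℝ)^(s n) = ((2^(s n) : ℕ) : ℝ) := by push_cast; ring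
    _ ≤ (⌊1/ε n⌋₊ : ℝ) := by exact_mod_cast h1
    _ ≤ 1/ε n := Nat.floor_le (le_of_lt (one_div_pos.mpr (hεpos n hn)))
  have hεinv : ∀ n : ℕ, 1 ≤ n → 1/ε n ≤ (2:ℝ)^(s n + 1) := by
    intro n hn
    have h1 : ⌊1/ε n⌋₊ < 2^(s n + 1) := Nat.lt_pow_succ_log_self (by norm_num) _
    have h2 : (1:ℝ)/ε n < (⌊1/ε n⌋₊ : ℝ) + 1 := Nat.lt_floor_add_one _
    have h3 : ((⌊1/ε n⌋₊ : ℕ):ℝ) + 1 ≤ ((2^(s n + 1) : ℕ):ℝ) := by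
      exact_mod_cast h1
    calc (1:ℝ)/ε n ≤ (⌊1/ε n⌋₊ : ℝ) + 1 := h2.le
    _ ≤ ((2^(s n + 1) : ℕ):ℝ) := h3
    _ = (2:ℝ)^(s n + 1) := by push_cast; ring
  have hεub3 : ∀ n : ℕ, 1 ≤ n → 1/ε n ≤ 3*(n:ℝ) := by
    intro n hn
    have h := hεlb n hn
    have hnp : (0:ℝ) < n := by exact_mod_cast hn
    rw [div_le_iff₀ (hεpos n hn)]
    rw [div_le_iff₀ (by positivity : (0:ℝ) < 3*(n:ℝ))] at h
    linarith
  have hsle : ∀ n ∈ Icc 1 R, s n ∈ Finset.range (S+1) := by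
    intro n hn
    rw [Finset.mem_Icc] at hn
    rw [Finset.mem_range, Nat.lt_succ_iff, hs, hS]
    apply Nat.log_mono_right
    have h1 : (1:ℝ)/ε n ≤ 3*R := by
      calc (1:ℝ)/ε n ≤ 3*(n:ℝ) := hεub3 n hn.1
      _ ≤ 3*R := by
          have : (n:ℝ) ≤ R := by exact_mod_cast hn.2
          linarith
    calc ⌊1/ε n⌋₊ ≤ ⌊(3*(R:ℝ) : ℝ)⌋₊ := Nat.floor_le_floor h1
    _ = 3*R := by
        rw [show (3*(R:ℝ) : ℝ) = ((3*R : ℕ):ℝ) by push_cast; ring, Nat.floor_natCast]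
  -- rewrite sum fiberwise
  rw [← Finset.sum_fiberwise_of_maps_to hsle]
  -- bound each fiber
  have hfiber : ∀ y ∈ Finset.range (S+1),
      ∑ r ∈ (Icc 1 R).filter (fun r => s r = y), 1/((r:ℝ) * ε r)
        ≤ 12 * (1 + Real.log R) := by
    intro y _
    set A := (Icc 1 R).filter (fun r => s r = y) with hA
    set d : ℕ := 2^y / 6 + 1 with hdd
    have hd1 : 1 ≤ d := by rw [hdd]; exact Nat.le_add_left 1 _
    have h6dn : (2^y : ℕ) < 6*d := by
      rw [hdd]
      generalize (2^y : ℕ) = M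
      omega
    have h6d : (2:ℝ)^y ≤ 6*(d:ℝ) := by exact_mod_cast h6dn.le
    have hmemA : ∀ r ∈ A, r ∈ Icc 1 R ∧ s r = y := by
      intro r hr
      rw [hA, Finset.mem_filter] at hr
      exact hr
    have hmem2 : ∀ r ∈ A, d ≤ r ∧ r ≤ R := by
      intro r hr
      obtain ⟨hrI, hry⟩ := hmemA r hr
      rw [Finset.mem_Icc] at hrI
      constructor
      · -- 2^y ≤ 3r hence r ≥ d
        have h1 : (2:ℝ)^y ≤ 3*(r:ℝ) := by
          calc (2:ℝ)^y = (2:ℝ)^(s r) := by rw [hry]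
          _ ≤ 1/ε r := h2s_le r hrI.1
          _ ≤ 3*(r:ℝ) := hεub3 r hrI.1
        have h2 : (2^y : ℕ) ≤ 3*r := by exact_mod_cast h1
        omega
      · exact hrI.2
    have hsepA : ∀ r ∈ A, ∀ r' ∈ A, r < r' → d ≤ r' - r := by
      intro r hr r' hr' hlt
      obtain ⟨hrI, hry⟩ := hmemA r hr
      obtain ⟨hrI', hry'⟩ := hmemA r' hr'
      rw [Finset.mem_Icc] at hrI hrI'
      -- |(r'-r)α - p| ≤ ε r' + ε r ≤ 2 * 2^{-y}
      have hx1 : 1 ≤ r' - r := by omega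
      have hcast : ((r' - r : ℕ):ℝ) = (r':ℝ) - r := by
        push_cast [Nat.cast_sub hlt.le]; ring
      have htri : 1/(3*((r'-r : ℕ):ℝ)) ≤ ε r' + ε r := by
        have h := hdio (r'-r) hx1 (round ((r':ℝ)*α) - round ((r:ℝ)*α))
        calc 1/(3*((r'-r : ℕ):ℝ)) ≤ |((r'-r:ℕ):ℝ)*α - (round ((r':ℝ)*α) - round ((r:ℝ)*α) : ℤ)| := h
        _ = |((r':ℝ)*α - round ((r':ℝ)*α)) - ((r:ℝ)*α - round ((r:ℝ)*α))| := by
            rw [hcast]; push_cast; ring_nf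
        _ ≤ ε r' + ε r := abs_sub _ _
      have hεy : ε r ≤ 1/(2:ℝ)^y ∧ ε r' ≤ 1/(2:ℝ)^y := by
        constructor
        · rw [← hry]
          have := h2s_le r hrI.1
          rw [le_div_iff₀ (hεpos r hrI.1)] at this
          rw [div_eq_mul_inv, one_mul, ← one_div, le_div_iff₀ (by positivity)]
          linarith [this]
        · rw [← hry']
          have := h2s_le r' hrI'.1
          rw [le_div_iff₀ (hεpos r' hrI'.1)] at this
          rw [div_eq_mul_inv, one_mul, ← one_div, le_div_iff₀ (by positivity)]
          linarith [this]
      -- 1/(3x) ≤ 2/2^y  ⟹  2^y ≤ 6x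
      have hxpos : (0:ℝ) < ((r'-r:ℕ):ℝ) := by exact_mod_cast hx1
      have h2y : (2:ℝ)^y ≤ 6*((r'-r:ℕ):ℝ) := by
        have h1 : 1/(3*((r'-r : ℕ):ℝ)) ≤ 2/(2:ℝ)^y := by
          calc 1/(3*((r'-r : ℕ):ℝ)) ≤ ε r' + ε r := htri
          _ ≤ 2/(2:ℝ)^y := by
              have h2 : 2/(2:ℝ)^y = 1/(2:ℝ)^y + 1/(2:ℝ)^y := by ring
              linarith [hεy.1, hεy.2]
        rw [div_le_div_iff₀ (by positivity) (by positivity)] at h1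
        linarith
      have h2yn : (2^y : ℕ) ≤ 6*(r'-r) := by exact_mod_cast h2y
      have h3 : ¬ (3 ∣ 2^y) := by
        intro h
        have := Nat.Prime.dvd_of_dvd_pow Nat.prime_three h
        omega
      omega
    have hterm : ∀ r ∈ A, 1/((r:ℝ) * ε r) ≤ (2:ℝ)^(y+1) * (1/(r:ℝ)) := by
      intro r hr
      obtain ⟨hrI, hry⟩ := hmemA r hr
      rw [Finset.mem_Icc] at hrI
      have hrpos : (0:ℝ) < r := by exact_mod_cast hrI.1
      have h1 : 1/ε r ≤ (2:ℝ)^(y+1) := by rw [← hry]; exact hεinv r hrI.1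
      calc 1/((r:ℝ) * ε r) = (1/(r:ℝ)) * (1/ε r) := by rw [one_div, one_div, one_div, mul_inv]
      _ ≤ (1/(r:ℝ)) * (2:ℝ)^(y+1) := by
          apply mul_le_mul_of_nonneg_left h1 (by positivity)
      _ = (2:ℝ)^(y+1) * (1/(r:ℝ)) := by ring
    calc ∑ r ∈ A, 1/((r:ℝ) * ε r) ≤ ∑ r ∈ A, (2:ℝ)^(y+1) * (1/(r:ℝ)) :=
          Finset.sum_le_sum hterm
    _ = (2:ℝ)^(y+1) * ∑ r ∈ A, (1/(r:ℝ)) := by rw [Finset.mul_sum]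
    _ ≤ (2:ℝ)^(y+1) * ((1/(d:ℝ)) * (1 + Real.log R)) := by
        apply mul_le_mul_of_nonneg_left (separated_sum A d R hd1 hR hmem2 hsepA) (by positivity)
    _ ≤ 12 * (1 + Real.log R) := by
        have hd0 : (0:ℝ) < d := by exact_mod_cast hd1
        have h1d : (1/(d:ℝ)) ≤ 6/(2:ℝ)^y := by
          rw [div_le_div_iff₀ hd0 (by positivity)]
          linarith [h6d]
        have : (2:ℝ)^(y+1) * (1/(d:ℝ)) ≤ 12 := by
          calc (2:ℝ)^(y+1) * (1/(d:ℝ)) ≤ (2:ℝ)^(y+1) * (6/(2:ℝ)^y) := by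
                apply mul_le_mul_of_nonneg_left h1d (by positivity)
          _ = 12 := by rw [pow_succ]; field_simp; ring
        nlinarith [hlogR]
  -- total
  calc ∑ y ∈ Finset.range (S+1), ∑ r ∈ (Icc 1 R).filter (fun r => s r = y), 1/((r:ℝ) * ε r)
      ≤ ∑ y ∈ Finset.range (S+1), 12 * (1 + Real.log R) := Finset.sum_le_sum hfiber
  _ = (S+1 : ℕ) * (12 * (1 + Real.log R)) := by rw [Finset.sum_const, Finset.card_range]; push_cast; ring
  _ ≤ 60 * (1 + Real.log R)^2 := by
      have hSb : (S:ℝ) * Real.log 2 ≤ Real.log 3 + Real.log R := by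
        have h2S : ((2^S : ℕ):ℝ) ≤ ((3*R : ℕ):ℝ) := by
          exact_mod_cast Nat.pow_log_le_self 2 (by omega : 3*R ≠ 0)
        have h3 : Real.log ((2:ℝ)^S) ≤ Real.log (3*R) := by
          apply Real.log_le_log (by positivity)
          push_cast at h2S ⊢
          linarith
        rw [Real.log_pow, Real.log_mul (by norm_num) (by positivity)] at h3
        exact_mod_cast h3
      have hlog2 : (0.6931471803 : ℝ) < Real.log 2 := Real.log_two_gt_d9
      have hlog3 : Real.log 3 ≤ 2 * Real.log 2 := by
        calc Real.log 3 ≤ Real.log 4 := Real.log_le_log (by norm_num) (by norm_num)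
        _ = 2 * Real.log 2 := by
            rw [show (4:ℝ) = 2^2 by norm_num, Real.log_pow]; push_cast; ring
      have hS0 : (0:ℝ) ≤ S := by positivity
      have h1 : ((S:ℝ) - 2) * Real.log 2 ≤ Real.log R := by nlinarith [hSb, hlog3]
      have hS5 : (S:ℝ) + 1 ≤ 3 + 1.45 * Real.log R := by
        rcases le_or_gt (S:ℝ) 2 with h | h
        · linarith
        · nlinarith [h1, hlog2]
      push_cast
      nlinarith [hlogR, hS5, mul_nonneg hlogR hlogR,
        mul_le_mul_of_nonneg_right hS5 (by linarith : (0:ℝ) ≤ 12*(1+Real.log R))]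


lemma abs_one_sub_exp_sq (x : ℝ) :
    (Complex.abs (1 - Complex.exp (x * Complex.I)))^2 = 2 - 2 * Real.cos x := by
  rw [Complex.sq_abs, Complex.normSq_apply]
  simp only [Complex.sub_re, Complex.sub_im, Complex.exp_ofReal_mul_I_re,
    Complex.exp_ofReal_mul_I_im, Complex.one_re, Complex.one_im]
  nlinarith [Real.sin_sq_add_cos_sq x]


/-- For the golden mean `α = (√5 - 1)/2`, `g x = log (2 - 2 cos (2π x))` and the Birkhoff
sums `S k = ∑_{j=1}^{k} g (j α)`, there is a constant `C > 0` such that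
`|S k| ≤ C (log k)²` for all `k ≥ 2`. -/
theorem birkhoff_sum_log_squared_bound (α : ℝ) (hα : α = (Real.sqrt 5 - 1) / 2)
    (g : ℝ → ℝ) (hg : ∀ x, g x = Real.log (2 - 2 * Real.cos (2 * Real.pi * x)))
    (S : ℕ → ℝ) (hS : ∀ k, S k = ∑ j ∈ Finset.Icc 1 k, g (j * α)) :
    ∃ C > 0, ∀ k : ℕ, 2 ≤ k → |S k| ≤ C * (Real.log k) ^ 2 := by
  have hdio : ∀ r : ℕ, 1 ≤ r → ∀ p : ℤ, 1/(3*(r:ℝ)) ≤ |(r:ℝ) * α - p| := by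
    rw [hα]; exact golden_dioph
  set εf : ℕ → ℝ := fun n => |(n:ℝ)*α - round ((n:ℝ)*α)| with hεf
  set w : ℕ → ℂ := fun n => Complex.exp (((2*Real.pi*((n:ℝ)*α)) : ℝ) * Complex.I) with hw
  have hepos : ∀ n : ℕ, 1 ≤ n → 0 < εf n := by
    intro n hn
    have h := hdio n hn (round ((n:ℝ)*α))
    have hn' : (0:ℝ) < n := by exact_mod_cast hn
    have : 0 < 1/(3*(n:ℝ)) := by positivity
    exact lt_of_lt_of_le this h
  have helb : ∀ n : ℕ, 1 ≤ n → 1/(3*(n:ℝ)) ≤ εf n := fun n hn => hdio n hn _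
  have hwabs : ∀ n : ℕ, Complex.abs (w n) = 1 := fun n => Complex.abs_exp_ofReal_mul_I _
  have habs_w : ∀ n : ℕ, Complex.abs (1 - w n) = 2*|Real.sin (Real.pi * ((n:ℝ)*α))| := by
    intro n
    rw [hw]
    rw [abs_one_sub_exp (2*Real.pi*((n:ℝ)*α))]
    norm_num
    congr 1
    ring
  have hlb : ∀ n : ℕ, 1 ≤ n → 4 * εf n ≤ Complex.abs (1 - w n) := by
    intro n hn
    rw [habs_w n]
    have := sin_pi_ge ((n:ℝ)*α)
    rw [hεf]
    linarith
  have habs_pos : ∀ n : ℕ, 1 ≤ n → 0 < Complex.abs (1 - w n) := by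
    intro n hn
    have h1 := hlb n hn
    have h2 := hepos n hn
    linarith
  have hw1 : ∀ n : ℕ, 1 ≤ n → w n ≠ 1 := by
    intro n hn h
    have := habs_pos n hn
    rw [h] at this
    simp at this
  have hwpow : ∀ n r : ℕ, (w n)^r = w (n*r) := by
    intro n r
    rw [hw, ← Complex.exp_nat_mul]
    congr 1
    push_cast
    ring
  -- identity for g
  have hgid : ∀ j : ℕ, 1 ≤ j → g ((j:ℝ)*α) = 2 * (Complex.log (1 - w j)).re := by
    intro j hj
    rw [hg, Complex.log_re]
    have h1 : 2 - 2*Real.cos (2*Real.pi*((j:ℝ)*α)) = (Complex.abs (1 - w j))^2 := by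
      rw [hw, abs_one_sub_exp_sq]
    rw [h1, Real.log_pow, Complex.norm_eq_abs]
    push_cast
    ring
  refine ⟨1000, by norm_num, ?_⟩
  intro k hk
  set R : ℕ := k^2 with hRdef
  have hR4 : 4 ≤ R := by
    calc (4:ℕ) = 2^2 := rfl
    _ ≤ k^2 := Nat.pow_le_pow_left hk 2
  have hR1 : 1 ≤ R := by omega
  have hk1 : (1:ℝ) ≤ k := by exact_mod_cast (by omega : 1 ≤ k)
  have hRcast : (R:ℝ) = (k:ℝ)^2 := by rw [hRdef]; push_cast; ring
  -- error-term bound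
  have hEbd : ∀ j ∈ Icc 1 k,
      ‖Complex.log (1 - w j) + ∑ r ∈ Icc 1 R, (w j)^r / r‖ ≤ 3*(k:ℝ)/(2*((R:ℝ)+1)) := by
    intro j hj
    rw [Finset.mem_Icc] at hj
    have hj1 : (1:ℝ) ≤ j := by exact_mod_cast hj.1
    have hjk : (j:ℝ) ≤ k := by exact_mod_cast hj.2
    have habs1 := habs_pos j hj.1
    refine (log_trunc (w j) (hwabs j) (hw1 j hj.1) R).trans ?_
    have h0 : 4*(1/(3*(j:ℝ))) ≤ Complex.abs (1 - w j) := by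
      have h1 := helb j hj.1
      have h2 := hlb j hj.1
      linarith
    have h3 : (0:ℝ) < 3*(j:ℝ) := by linarith
    have h2 : 4 ≤ 3*(j:ℝ)*Complex.abs (1 - w j) := by
      have h4 := mul_le_mul_of_nonneg_left h0 h3.le
      have h5 : 3*(j:ℝ)*(4*(1/(3*(j:ℝ)))) = 4 := by field_simp
      rw [h5] at h4
      exact h4
    have h6 : 4 ≤ 3*(k:ℝ)*Complex.abs (1 - w j) := by
      nlinarith [h2, mul_nonneg (sub_nonneg.mpr hjk) habs1.le]
    have h7 : (0:ℝ) ≤ (R:ℝ)+1 := by positivity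
    rw [div_le_div_iff₀ (by positivity) (by positivity)]
    nlinarith [mul_le_mul_of_nonneg_right h6 h7]
  have hEsum : ‖∑ j ∈ Icc 1 k, (Complex.log (1 - w j) + ∑ r ∈ Icc 1 R, (w j)^r / r)‖
      ≤ 3/2 := by
    calc ‖∑ j ∈ Icc 1 k, (Complex.log (1 - w j) + ∑ r ∈ Icc 1 R, (w j)^r / r)‖
        ≤ ∑ j ∈ Icc 1 k, ‖Complex.log (1 - w j) + ∑ r ∈ Icc 1 R, (w j)^r / r‖ :=
          norm_sum_le _ _
    _ ≤ ∑ _j ∈ Icc 1 k, 3*(k:ℝ)/(2*((R:ℝ)+1)) := Finset.sum_le_sum hEbd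
    _ = (k:ℝ) * (3*(k:ℝ)/(2*((R:ℝ)+1))) := by
        rw [Finset.sum_const, Nat.card_Icc]
        simp
    _ ≤ 3/2 := by
        rw [hRcast]
        have he : (k:ℝ)*(3*(k:ℝ)/(2*((k:ℝ)^2+1))) = 3*(k:ℝ)^2/(2*((k:ℝ)^2+1)) := by ring
        rw [he, div_le_div_iff₀ (by positivity) (by norm_num)]
        nlinarith [hk1]
  -- main-term bound
  have hGid : (∑ j ∈ Icc 1 k, ∑ r ∈ Icc 1 R, (w j)^r / r)
      = ∑ r ∈ Icc 1 R, (∑ j ∈ Icc 1 k, (w r)^j) / (r:ℂ) := by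
    rw [Finset.sum_comm]
    apply Finset.sum_congr rfl
    intro r _
    rw [Finset.sum_div]
    apply Finset.sum_congr rfl
    intro j _
    rw [hwpow j r, hwpow r j, Nat.mul_comm]
  have hGbd : ‖∑ r ∈ Icc 1 R, (∑ j ∈ Icc 1 k, (w r)^j) / (r:ℂ)‖
      ≤ 30 * (1 + Real.log R)^2 := by
    have hterm : ∀ r ∈ Icc 1 R, ‖(∑ j ∈ Icc 1 k, (w r)^j) / (r:ℂ)‖
        ≤ (1/2) * (1/((r:ℝ) * εf r)) := by
      intro r hr
      rw [Finset.mem_Icc] at hr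
      have hr1 : (1:ℝ) ≤ r := by exact_mod_cast hr.1
      have hrpos : (0:ℝ) < r := by linarith
      have hepos' := hepos r hr.1
      have hlb' := hlb r hr.1
      have habs' := habs_pos r hr.1
      rw [norm_div]
      have hnr : ‖(r:ℂ)‖ = (r:ℝ) := by
        rw [Complex.norm_natCast]
      rw [hnr]
      have hg1 : ‖∑ j ∈ Icc 1 k, (w r)^j‖ ≤ 2 / Complex.abs (1 - w r) :=
        geom_bound (w r) (hwabs r) (hw1 r hr.1) k
      have hg2 : 2 / Complex.abs (1 - w r) ≤ 1/(2 * εf r) := by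
        rw [div_le_div_iff₀ habs' (by positivity)]
        nlinarith [hlb']
      calc ‖∑ j ∈ Icc 1 k, (w r)^j‖ / (r:ℝ) ≤ (1/(2 * εf r)) / (r:ℝ) := by
            gcongr
            exact hg1.trans hg2
      _ = (1/2) * (1/((r:ℝ) * εf r)) := by
            field_simp
    calc ‖∑ r ∈ Icc 1 R, (∑ j ∈ Icc 1 k, (w r)^j) / (r:ℂ)‖
        ≤ ∑ r ∈ Icc 1 R, ‖(∑ j ∈ Icc 1 k, (w r)^j) / (r:ℂ)‖ := norm_sum_le _ _
    _ ≤ ∑ r ∈ Icc 1 R, (1/2) * (1/((r:ℝ) * εf r)) := Finset.sum_le_sum hterm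
    _ = (1/2) * ∑ r ∈ Icc 1 R, 1/((r:ℝ) * εf r) := by rw [Finset.mul_sum]
    _ ≤ (1/2) * (60 * (1 + Real.log R)^2) := by
        apply mul_le_mul_of_nonneg_left (count_sum α hdio R hR1) (by norm_num)
    _ = 30 * (1 + Real.log R)^2 := by ring
  -- combine
  have hLsplit : ∑ j ∈ Icc 1 k, Complex.log (1 - w j)
      = (∑ j ∈ Icc 1 k, (Complex.log (1 - w j) + ∑ r ∈ Icc 1 R, (w j)^r / r))
        - ∑ r ∈ Icc 1 R, (∑ j ∈ Icc 1 k, (w r)^j) / (r:ℂ) := by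
    rw [← hGid, Finset.sum_add_distrib]
    ring
  have hSk : S k = 2 * (∑ j ∈ Icc 1 k, Complex.log (1 - w j)).re := by
    rw [hS k, Complex.re_sum, Finset.mul_sum]
    apply Finset.sum_congr rfl
    intro j hj
    rw [Finset.mem_Icc] at hj
    rw [hgid j hj.1]
  have hnormL : ‖∑ j ∈ Icc 1 k, Complex.log (1 - w j)‖
      ≤ 3/2 + 30 * (1 + Real.log R)^2 := by
    rw [hLsplit]
    refine (norm_sub_le _ _).trans ?_
    exact add_le_add hEsum hGbd
  have habsre : |S k| ≤ 2 * (3/2 + 30 * (1 + Real.log R)^2) := by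
    rw [hSk, abs_mul]
    rw [show |(2:ℝ)| = 2 by norm_num]
    apply mul_le_mul_of_nonneg_left _ (by norm_num)
    exact (Complex.abs_re_le_abs _).trans hnormL
  -- numerics
  have hlogR : Real.log R = 2 * Real.log k := by
    rw [hRdef]
    push_cast
    rw [Real.log_pow]
    push_cast
    ring
  have hL2 : (0.6931471803:ℝ) < Real.log k := by
    calc (0.6931471803:ℝ) < Real.log 2 := Real.log_two_gt_d9
    _ ≤ Real.log k := Real.log_le_log (by norm_num) (by exact_mod_cast hk)
  rw [hlogR] at habsre
  refine habsre.trans ?_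
  nlinarith [hL2, mul_nonneg (le_of_lt (lt_trans (by norm_num) hL2))
    (le_of_lt (lt_trans (by norm_num) hL2)),
    mul_nonneg (by linarith : (0:ℝ) ≤ Real.log k - 0.6931471803)
      (by linarith : (0:ℝ) ≤ Real.log k)]
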